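/- The pushforward measures along the NTC satisfy μ_p.map g ≪ μ_u.map g, and for (μ_u.map g)-almost every y ∈ [0,1], the Radon–Nikodym derivative satisfies d(μ_p.map g)/d(μ_u.map g)(y) = y/(1−y). -/

import Mathlib

open MeasureTheory ENNReal NNReal

lemma map_withDensity_comp {X : Type*} [MeasurableSpace X] (μ : Measure X)
    (g : X → ℝ) (hg : Measurable g) (f : ℝ → ℝ≥0∞) (hf : Measurable f) :
    (μ.withDensity (fun x => f (g x))).map g = (μ.map g).withDensity f := by
  ext s hs
  rw [Measure.map_apply (by fun_prop) hs, withDensity_apply _ (hg hs),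
    withDensity_apply _ hs, setLIntegral_map hs hf hg]

/-- The paper's Lemma 1 instantiated at the Non-Traditional Classifier
`g x = f_p x / (f_p x + f_u x)`: the pushforward measures satisfy
`μp.map g ≪ μu.map g`, and the density ratio of the NTC predictions is
`y / (1 - y)` almost everywhere. -/
theorem ntc_pushforward_density_ratio {X : Type*} [MeasurableSpace X]
    (ν : Measure X) [SigmaFinite ν] (f_p f_u : X → ℝ≥0)
    (hfp : Measurable f_p) (hfu : Measurable f_u)
    (μp : Measure X) (hμp : μp = ν.withDensity fun x => (f_p x : ℝ≥0∞))
    (μu : Measure X) (hμu : μu = ν.withDensity fun x => (f_u x : ℝ≥0∞))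
    [IsProbabilityMeasure μp] [IsProbabilityMeasure μu] (hac : μp ≪ μu)
    (g : X → ℝ) (hg : g = fun x => (f_p x : ℝ) / ((f_p x : ℝ) + (f_u x : ℝ))) :
    μp.map g ≪ μu.map g ∧
      ∀ᵐ y ∂(μu.map g),
        (μp.map g).rnDeriv (μu.map g) y = ENNReal.ofReal (y / (1 - y)) := by
  set φ : ℝ → ℝ≥0∞ := fun y => ENNReal.ofReal (y / (1 - y)) with hφ
  have hφm : Measurable φ :=
    ENNReal.measurable_ofReal.comp (measurable_id.div (measurable_const.sub measurable_id))
  have hgm : Measurable g := by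
    rw [hg]
    exact (measurable_coe_nnreal_real.comp hfp).div
      ((measurable_coe_nnreal_real.comp hfp).add (measurable_coe_nnreal_real.comp hfu))
  -- f_p = 0 a.e. on {f_u = 0}
  have hS : MeasurableSet {x | f_u x = 0} := hfu (measurableSet_singleton 0)
  have hu0 : μu {x | f_u x = 0} = 0 := by
    rw [hμu, withDensity_apply _ hS, setLIntegral_eq_zero_iff hS (by fun_prop)]
    exact Filter.Eventually.of_forall fun x hx => by simp [show f_u x = 0 from hx]
  have hp0 : μp {x | f_u x = 0} = 0 := hac hu0
  have hp0' : ∀ᵐ x ∂ν, f_u x = 0 → f_p x = 0 := by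
    rw [hμp, withDensity_apply _ hS, setLIntegral_eq_zero_iff hS (by fun_prop)] at hp0
    filter_upwards [hp0] with x hx h0
    exact_mod_cast hx h0
  -- key: μp = μu.withDensity (φ ∘ g)
  have key : μp = μu.withDensity (fun x => φ (g x)) := by
    rw [hμp, hμu, ← withDensity_mul (f := fun x => ((f_u x : ℝ≥0∞))) (g := fun x => φ (g x)) ν (by fun_prop) (hφm.comp hgm)]
    apply withDensity_congr_ae
    filter_upwards [hp0'] with x hx
    rcases eq_or_ne (f_u x) 0 with h0 | h0
    · simp [h0, hx h0]
    · have hu : (0:ℝ) < (f_u x : ℝ) := by positivity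
      have hsum : (0:ℝ) < (f_p x : ℝ) + (f_u x : ℝ) := by positivity
      have hgx : g x = (f_p x : ℝ) / ((f_p x : ℝ) + (f_u x : ℝ)) := by rw [hg]
      have h1 : (1:ℝ) - g x = (f_u x : ℝ) / ((f_p x : ℝ) + (f_u x : ℝ)) := by
        rw [hgx]; field_simp; ring
      have h2 : g x / (1 - g x) = (f_p x : ℝ) / (f_u x : ℝ) := by
        rw [h1, hgx]; field_simp
      simp only [Pi.mul_apply, hφ, h2]
      rw [show ((f_u x : ℝ≥0∞)) = ENNReal.ofReal ((f_u x : ℝ)) from ENNReal.ofReal_coe_nnreal.symm,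
        ← ENNReal.ofReal_mul (f_u x).coe_nonneg,
        show ((f_p x : ℝ≥0∞)) = ENNReal.ofReal ((f_p x : ℝ)) from ENNReal.ofReal_coe_nnreal.symm]
      congr 1
      field_simp
  have hmap : μp.map g = (μu.map g).withDensity φ := by
    rw [key, map_withDensity_comp μu g hgm φ hφm]
  have : IsProbabilityMeasure (μu.map g) := Measure.isProbabilityMeasure_map hgm.aemeasurable
  refine ⟨?_, ?_⟩
  · rw [hmap]; exact withDensity_absolutelyContinuous _ _
  · rw [hmap]
    exact Measure.rnDeriv_withDensity _ hφm
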